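/- Let u = (x,y,x̄,ȳ) with (x,y) ∈ dom F × dom G, x̄ = x + σK*y and ȳ = y − τKx. For any u^k ∈ U, with u^{k+1} = T u^k and transitional variables x_test^{k+1}, y_test^{k+1}, one has L(x_test^{k+1}, y) − L(x, y_test^{k+1}) ≤ ⟨u^k − u^{k+1}, u^{k+1} − u⟩_M = (1/2)( ‖u^k − u‖²_M − ‖u^{k+1} − u‖²_M − ‖u^{k+1} − u^k‖²_M ). -/

import Mathlib

open scoped RealInnerProductSpace

section

variable {X Y : Type*}
  [NormedAddCommGroup X] [InnerProductSpace ℝ X] [CompleteSpace X]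
  [NormedAddCommGroup Y] [InnerProductSpace ℝ Y] [CompleteSpace Y]

/-- The (possibly degenerate) inner product `⟨u, u'⟩_𝐌` on `𝕌 = (X × Y)²`, where
`u = (x, y, x̄, ȳ)` and
`⟨u,u'⟩_𝐌 = (1/σ)[⟨(N₁−I)x, x'⟩ + ⟨x̄, x̄'⟩] + (1/τ)[⟨(N₂−I)y, y'⟩ + ⟨ȳ, ȳ'⟩]`. -/
noncomputable def Mbil (σ τ : ℝ) (N₁ : X →L[ℝ] X) (N₂ : Y →L[ℝ] Y)
    (u u' : X × Y × X × Y) : ℝ :=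
  (1 / σ) * (⟪N₁ u.1 - u.1, u'.1⟫ + ⟪u.2.2.1, u'.2.2.1⟫)
    + (1 / τ) * (⟪N₂ u.2.1 - u.2.1, u'.2.1⟫ + ⟪u.2.2.2, u'.2.2.2⟫)

theorem Mbil_polar (σ τ : ℝ) (N₁ : X →L[ℝ] X) (N₂ : Y →L[ℝ] Y)
    (h1 : ∀ a b : X, ⟪N₁ a, b⟫ = ⟪N₁ b, a⟫) (h2 : ∀ a b : Y, ⟪N₂ a, b⟫ = ⟪N₂ b, a⟫)
    (a b c : X × Y × X × Y) :
    Mbil σ τ N₁ N₂ (a - b) (b - c)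
      = (1/2) * (Mbil σ τ N₁ N₂ (a - c) (a - c) - Mbil σ τ N₁ N₂ (b - c) (b - c)
          - Mbil σ τ N₁ N₂ (b - a) (b - a)) := by
  simp only [Mbil, Prod.fst_sub, Prod.snd_sub, map_sub, inner_sub_left, inner_sub_right]
  simp only [h1, h2, real_inner_comm]
  ring

/-- **Proposition 2.2 (Lemma 2.2 of Bredies–Sun).** If `u = (x, y, x̄, ȳ)` with
`x̄ = x + σK*y`, `ȳ = y − τKx`, then for one PDR step `u^{k+1} = 𝒯 u^k` with transitional
variables `(x_test^{k+1}, y_test^{k+1})` one has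
`ℒ(x_test^{k+1}, y) − ℒ(x, y_test^{k+1}) ≤ ⟨u^k − u^{k+1}, u^{k+1} − u⟩_𝐌
  = ½(‖u^k − u‖²_𝐌 − ‖u^{k+1} − u‖²_𝐌 − ‖u^{k+1} − u^k‖²_𝐌)`. -/
theorem stmt_1
    (F : X → ℝ) (G : Y → ℝ)
    (hF : ConvexOn ℝ Set.univ F) (hFlsc : LowerSemicontinuous F)
    (hG : ConvexOn ℝ Set.univ G) (hGlsc : LowerSemicontinuous G)
    (K : X →L[ℝ] Y)
    (σ τ : ℝ) (hσ : 0 < σ) (hτ : 0 < τ)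
    (N₁ : X →L[ℝ] X) (N₂ : Y →L[ℝ] Y)
    (hN₁sa : IsSelfAdjoint N₁) (hN₂sa : IsSelfAdjoint N₂)
    (hN₁ : ∀ v : X, ‖v‖ ^ 2 ≤ ⟪N₁ v, v⟫)
    (hN₂ : ∀ v : Y, ‖v‖ ^ 2 ≤ ⟪N₂ v, v⟫)
    -- the comparison point `u = (x₀, y₀, xb₀, yb₀)` with `x̄ = x + σK*y`, `ȳ = y − τKx`
    (x₀ : X) (y₀ : Y) (xb₀ : X) (yb₀ : Y)
    (hxb₀ : xb₀ = x₀ + σ • (ContinuousLinearMap.adjoint K) y₀)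
    (hyb₀ : yb₀ = y₀ - τ • K x₀)
    -- one PDR step: input `u^k = (x, y, xb, yb)`, output `u^{k+1} = (x', y', xb', yb')`,
    -- transitional variables `(xt, yt)`
    (x x' xt xb xb' : X) (y y' yt yb yb' : Y)
    (hx' : N₁ x' = (N₁ x - x) + xb - σ • (ContinuousLinearMap.adjoint K) y')
    (hy' : N₂ y' = (N₂ y - y) + yb + τ • K x')
    (hxt : ∀ w : X, σ * F xt + ⟪(2 : ℝ) • x' - xb - xt, w - xt⟫ ≤ σ * F w)
    (hyt : ∀ w : Y, τ * G yt + ⟪(2 : ℝ) • y' - yb - yt, w - yt⟫ ≤ τ * G w)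
    (hxb' : xb' = xb + xt - x')
    (hyb' : yb' = yb + yt - y') :
    (F xt + ⟪K xt, y₀⟫ - G y₀) - (F x₀ + ⟪K x₀, yt⟫ - G yt)
        ≤ Mbil σ τ N₁ N₂ ((x, y, xb, yb) - (x', y', xb', yb'))
            ((x', y', xb', yb') - (x₀, y₀, xb₀, yb₀))
      ∧ Mbil σ τ N₁ N₂ ((x, y, xb, yb) - (x', y', xb', yb'))
            ((x', y', xb', yb') - (x₀, y₀, xb₀, yb₀))
          = (1 / 2) *
            (Mbil σ τ N₁ N₂ ((x, y, xb, yb) - (x₀, y₀, xb₀, yb₀))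
                ((x, y, xb, yb) - (x₀, y₀, xb₀, yb₀))
              - Mbil σ τ N₁ N₂ ((x', y', xb', yb') - (x₀, y₀, xb₀, yb₀))
                  ((x', y', xb', yb') - (x₀, y₀, xb₀, yb₀))
              - Mbil σ τ N₁ N₂ ((x', y', xb', yb') - (x, y, xb, yb))
                  ((x', y', xb', yb') - (x, y, xb, yb))) := by
  have hs1 : ∀ a b : X, ⟪N₁ a, b⟫ = ⟪N₁ b, a⟫ := by
    intro a b
    have := ((ContinuousLinearMap.isSelfAdjoint_iff_isSymmetric).1 hN₁sa) a b
    simp only [ContinuousLinearMap.coe_coe] at this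
    rw [this, real_inner_comm]
  have hs2 : ∀ a b : Y, ⟪N₂ a, b⟫ = ⟪N₂ b, a⟫ := by
    intro a b
    have := ((ContinuousLinearMap.isSelfAdjoint_iff_isSymmetric).1 hN₂sa) a b
    simp only [ContinuousLinearMap.coe_coe] at this
    rw [this, real_inner_comm]
  have key : Mbil σ τ N₁ N₂ ((x, y, xb, yb) - (x', y', xb', yb'))
        ((x', y', xb', yb') - (x₀, y₀, xb₀, yb₀))
      = (1/σ) * ⟪(2 : ℝ) • x' - xb - xt, xt - x₀⟫
        + (1/τ) * ⟪(2 : ℝ) • y' - yb - yt, yt - y₀⟫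
        + ⟪K xt, y₀⟫ - ⟪K x₀, yt⟫ := by
    simp only [Mbil, Prod.fst_sub, Prod.snd_sub, map_sub, hx', hy', hxb', hyb', hxb₀, hyb₀]
    simp only [inner_sub_left, inner_sub_right, inner_add_left, inner_add_right,
      real_inner_smul_left, real_inner_smul_right, inner_smul_left, inner_smul_right,
      ContinuousLinearMap.adjoint_inner_left, ContinuousLinearMap.adjoint_inner_right,
      smul_eq_mul, two_smul, map_add, map_sub, map_smul, conj_trivial]
    simp only [real_inner_comm]
    field_simp
    ring
  constructor
  · rw [key]
    have h1 := hxt x₀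
    have h2 := hyt y₀
    rw [show x₀ - xt = -(xt - x₀) by abel, inner_neg_right] at h1
    rw [show y₀ - yt = -(yt - y₀) by abel, inner_neg_right] at h2
    have hA : F xt - F x₀ ≤ ⟪(2 : ℝ) • x' - xb - xt, xt - x₀⟫ / σ := by
      rw [le_div_iff₀ hσ]
      nlinarith [h1]
    have hB : G yt - G y₀ ≤ ⟪(2 : ℝ) • y' - yb - yt, yt - y₀⟫ / τ := by
      rw [le_div_iff₀ hτ]
      nlinarith [h2]
    have e1 : (1/σ) * ⟪(2 : ℝ) • x' - xb - xt, xt - x₀⟫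
        = ⟪(2 : ℝ) • x' - xb - xt, xt - x₀⟫ / σ := by ring
    have e2 : (1/τ) * ⟪(2 : ℝ) • y' - yb - yt, yt - y₀⟫
        = ⟪(2 : ℝ) • y' - yb - yt, yt - y₀⟫ / τ := by ring
    linarith [hA, hB]
  · exact Mbil_polar σ τ N₁ N₂ hs1 hs2 _ _ _

end
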